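/- The function f is nowhere monotonic: there is no nondegenerate subinterval of [0,1] on which f is monotone. -/

import Mathlib

open Set Filter

/-- Value of an `s`-adic code `α`: `∑ αₙ / sⁿ⁺¹`. -/
noncomputable def sval (s : ℕ) (α : ℕ → ℕ) : ℝ := ∑' n, (α n : ℝ) / (s : ℝ) ^ (n + 1)

/-- `α` is a sequence of digits in `{0, …, s−1}`. -/
def isDigits (s : ℕ) (α : ℕ → ℕ) : Prop := ∀ n, α n < s

/-- The `s`-adic cylinder of rank `m` with base `c₀ … c_{m−1}`. -/
def cylinder (s m : ℕ) (c : ℕ → ℕ) : Set ℝ :=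
  {x | ∃ α : ℕ → ℕ, isDigits s α ∧ (∀ i < m, α i = c i) ∧ x = sval s α}

/-- The sequence of output binary digits `βₙ`. -/
def betaSeq (A1 : Finset ℕ) (α : ℕ → ℕ) : ℕ → ℕ
  | 0 => if α 0 ∈ A1 then 1 else 0
  | n + 1 => if α (n + 1) = α n then betaSeq A1 α n else 1 - betaSeq A1 α n

lemma summable_sval (s : ℕ) (hs : 2 ≤ s) (α : ℕ → ℕ) (hα : ∀ n, α n < s) :
    Summable (fun n => (α n : ℝ) / (s : ℝ) ^ (n + 1)) := by
  have hs1 : (1:ℝ) < (s:ℝ) := by exact_mod_cast hs.trans_lt' one_lt_two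
  have hsp : (0:ℝ) < (s:ℝ) := by linarith
  refine Summable.of_nonneg_of_le (fun n => by positivity) (fun n => ?_)
    (summable_geometric_of_lt_one (r := 1/(s:ℝ)) (by positivity) (by rw [div_lt_one hsp]; linarith))
  have h1 : (α n : ℝ) ≤ (s:ℝ) := by exact_mod_cast (hα n).le
  rw [div_pow, one_pow, div_le_div_iff₀ (by positivity) (by positivity)]
  calc (α n : ℝ) * (s:ℝ)^n ≤ (s:ℝ) * (s:ℝ)^n := by
        exact mul_le_mul_of_nonneg_right h1 (by positivity)
    _ = 1 * (s:ℝ)^(n+1) := by ring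
    _ ≤ 1 * (s:ℝ)^(n+1) := le_rfl

lemma sval_eventually_const (s : ℕ) (hs : 2 ≤ s) (α : ℕ → ℕ) (hα : ∀ n, α n < s)
    (M e : ℕ) (he : ∀ n, M ≤ n → α n = e) :
    sval s α = (∑ n ∈ Finset.range M, (α n : ℝ) / (s:ℝ) ^ (n + 1))
      + (e : ℝ) / ((s:ℝ) ^ M * ((s:ℝ) - 1)) := by
  have hs1 : (1:ℝ) < (s:ℝ) := by exact_mod_cast hs.trans_lt' one_lt_two
  have hsp : (0:ℝ) < (s:ℝ) := by linarith
  have hsum := summable_sval s hs α hα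
  rw [sval, ← Summable.sum_add_tsum_nat_add M hsum]
  congr 1
  have hterm : ∀ i : ℕ, (α (i + M) : ℝ) / (s:ℝ) ^ (i + M + 1)
      = ((e:ℝ) / (s:ℝ)^(M+1)) * (1/(s:ℝ))^i := by
    intro i
    rw [he _ (Nat.le_add_left M i), div_pow, one_pow]
    rw [show i + M + 1 = (M+1) + i by ring, pow_add]
    field_simp
  rw [tsum_congr hterm, tsum_mul_left,
    tsum_geometric_of_lt_one (by positivity) (by rw [div_lt_one hsp]; linarith)]
  have h1 : (s:ℝ) - 1 ≠ 0 := by linarith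
  have h2 : (s:ℝ) ≠ 0 := by linarith
  field_simp
  ring

lemma betaSeq_le_one (A1 : Finset ℕ) (α : ℕ → ℕ) : ∀ n, betaSeq A1 α n ≤ 1
  | 0 => by unfold betaSeq; split <;> simp
  | n + 1 => by
    have := betaSeq_le_one A1 α n
    unfold betaSeq; split; · exact this
    · omega

lemma betaSeq_congr (A1 : Finset ℕ) (α α' : ℕ → ℕ) :
    ∀ n, (∀ i ≤ n, α i = α' i) → betaSeq A1 α n = betaSeq A1 α' n
  | 0, h => by simp [betaSeq, h 0 le_rfl]
  | n + 1, h => by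
    have ih := betaSeq_congr A1 α α' n (fun i hi => h i (hi.trans (Nat.le_succ n)))
    simp only [betaSeq, h (n+1) le_rfl, h n (Nat.le_succ n), ih]

lemma betaSeq_tail_const (A1 : Finset ℕ) (α : ℕ → ℕ) (M : ℕ)
    (h : ∀ n, M ≤ n → α n = α M) :
    ∀ n, M ≤ n → betaSeq A1 α n = betaSeq A1 α M := by
  intro n hn
  induction n with
  | zero => obtain rfl : M = 0 := Nat.le_zero.mp hn; rfl
  | succ n ih =>
    rcases Nat.lt_or_ge M (n+1) with hlt | hge
    · have hMn : M ≤ n := by omega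
      have h1 : α (n+1) = α n := by rw [h _ (by omega), h _ hMn]
      rw [show betaSeq A1 α (n+1) = if α (n+1) = α n then betaSeq A1 α n
          else 1 - betaSeq A1 α n from rfl, if_pos h1]
      exact ih hMn
    · have : M = n + 1 := by omega
      rw [this]

lemma exists_digit_sum (s : ℕ) (hs : 0 < s) : ∀ (m k : ℕ), k < s ^ m →
    ∃ c : ℕ → ℕ, (∀ i, c i < s) ∧ ∑ i ∈ Finset.range m, c i * s ^ (m - 1 - i) = k := by
  intro m
  induction m with
  | zero =>
    intro k hk
    simp only [pow_zero, Nat.lt_one_iff] at hk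
    exact ⟨fun _ => 0, fun _ => hs, by simp [hk]⟩
  | succ m ih =>
    intro k hk
    have hpow : 0 < s ^ m := Nat.pow_pos hs
    obtain ⟨c, hc, hsum⟩ := ih (k % s ^ m) (Nat.mod_lt _ hpow)
    refine ⟨fun i => if i = 0 then k / s ^ m else c (i - 1), fun i => ?_, ?_⟩
    · dsimp only; split
      · exact Nat.div_lt_of_lt_mul (by rwa [← pow_succ])
      · exact hc _
    · rw [Finset.sum_range_succ']
      have h1 : ∀ i ∈ Finset.range m,
          (if i + 1 = 0 then k / s ^ m else c (i + 1 - 1)) * s ^ (m + 1 - 1 - (i + 1))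
          = c i * s ^ (m - 1 - i) := by
        intro i _
        rw [if_neg (Nat.succ_ne_zero i)]
        congr 2
        omega
      rw [Finset.sum_congr rfl h1, hsum]
      simp only [if_pos rfl, (by omega : m + 1 - 1 - 0 = m)]
      exact Nat.mod_add_div' k (s ^ m)

/-- `f` is nowhere monotonic: on no nondegenerate subinterval of `[0,1]`
is `f` monotone (neither nondecreasing nor nonincreasing). -/
theorem f_nowhere_monotone (s : ℕ) (hs : 2 < s) (A0 A1 : Finset ℕ)
    (hA : A0 ∪ A1 = Finset.range s) (hdisj : Disjoint A0 A1)
    (h0 : A0.Nonempty) (h1 : A1.Nonempty) (f : ℝ → ℝ)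
    (hf : ∀ α : ℕ → ℕ, isDigits s α → f (sval s α) = sval 2 (betaSeq A1 α)) :
    ∀ a b : ℝ, 0 ≤ a → a < b → b ≤ 1 →
      ¬ MonotoneOn f (Set.Icc a b) ∧ ¬ AntitoneOn f (Set.Icc a b) := by
  intro a b ha hab hb1
  have hsR : (2:ℝ) < (s:ℝ) := by exact_mod_cast hs
  have hs3 : (3:ℝ) ≤ (s:ℝ) := by exact_mod_cast (by omega : 3 ≤ s)
  have hs1 : (1:ℝ) < (s:ℝ) := by linarith
  have hsp : (0:ℝ) < (s:ℝ) := by linarith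
  have hba : 0 < b - a := by linarith
  obtain ⟨m, hm⟩ := pow_unbounded_of_one_lt (2/(b-a)) hs1
  have hsm : (0:ℝ) < (s:ℝ)^m := by positivity
  have hsm1 : (0:ℝ) < (s:ℝ)^(m+1) := by positivity
  have hgap : 2 < (b - a) * (s:ℝ)^m := by
    rw [div_lt_iff₀ hba] at hm; linarith
  set k : ℕ := ⌈a * (s:ℝ)^m⌉₊ with hkdef
  have hk1 : a * (s:ℝ)^m ≤ k := Nat.le_ceil _
  have hk2 : (k:ℝ) < a * (s:ℝ)^m + 1 := Nat.ceil_lt_add_one (by positivity)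
  have hkb : ((k:ℝ)+1) ≤ b * (s:ℝ)^m := by nlinarith
  have hklt : k < s ^ m := by
    have hb' : (k:ℝ) < ((s^m : ℕ):ℝ) := by push_cast; nlinarith
    exact_mod_cast hb'
  obtain ⟨c, hc, hcsum⟩ := exists_digit_sum s (by omega) m k hklt
  have hcR : (∑ n ∈ Finset.range m, (c n : ℝ) / (s:ℝ)^(n+1)) = (k:ℝ) / (s:ℝ)^m := by
    rw [eq_div_iff (ne_of_gt hsm), Finset.sum_mul]
    have hterm : ∀ n ∈ Finset.range m,
        (c n : ℝ)/(s:ℝ)^(n+1) * (s:ℝ)^m = ((c n * s^(m-1-n) : ℕ) : ℝ) := by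
      intro n hn
      rw [Finset.mem_range] at hn
      push_cast
      rw [show (s:ℝ)^m = (s:ℝ)^(n+1) * (s:ℝ)^(m-1-n) by rw [← pow_add]; congr 1; omega,
        ← mul_assoc, div_mul_cancel₀ _ (by positivity)]
    rw [Finset.sum_congr rfl hterm, ← Nat.cast_sum, hcsum]
  set αf : ℕ → ℕ → ℕ := fun e n => if n < m then c n else if n = m then 1 else e with hαf
  have hdig : ∀ e, e < s → isDigits s (αf e) := by
    intro e he n
    simp only [hαf]
    split
    · exact hc n
    · split
      · omega
      · exact he
  have hxval : ∀ e : ℕ, e < s → sval s (αf e)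
      = (k:ℝ)/(s:ℝ)^m + 1/(s:ℝ)^(m+1) + (e:ℝ)/((s:ℝ)^(m+1) * ((s:ℝ)-1)) := by
    intro e he
    rw [sval_eventually_const s (by omega) (αf e) (hdig e he) (m+1) e
      (fun n hn => by simp only [hαf]; rw [if_neg (by omega), if_neg (by omega)])]
    rw [Finset.sum_range_succ]
    have h1 : ∀ n ∈ Finset.range m, ((αf e n : ℕ) : ℝ)/(s:ℝ)^(n+1) = (c n : ℝ)/(s:ℝ)^(n+1) := by
      intro n hn; rw [Finset.mem_range] at hn
      simp only [hαf, if_pos hn]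
    have h2 : αf e m = 1 := by simp [hαf]
    rw [Finset.sum_congr rfl h1, hcR, h2]
    push_cast
    ring
  have hlt : ∀ e e' : ℕ, e < e' → e' < s → sval s (αf e) < sval s (αf e') := by
    intro e e' h he'
    rw [hxval e (by omega), hxval e' he']
    have he2 : (e:ℝ) < (e':ℝ) := by exact_mod_cast h
    have hd : (0:ℝ) < (s:ℝ)^(m+1) * ((s:ℝ)-1) := by
      have : (0:ℝ) < (s:ℝ)-1 := by linarith
      positivity
    have hx : (e:ℝ)/((s:ℝ)^(m+1)*((s:ℝ)-1)) < (e':ℝ)/((s:ℝ)^(m+1)*((s:ℝ)-1)) := by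
      exact div_lt_div_of_pos_right he2 hd
    linarith
  have hmem : ∀ e : ℕ, e ≤ 2 → sval s (αf e) ∈ Icc a b := by
    intro e he
    rw [hxval e (by omega)]
    have hs2 : (2:ℝ) ≤ (s:ℝ)-1 := by linarith
    have he2 : (e:ℝ) ≤ 2 := by exact_mod_cast he
    constructor
    · have h1 : a ≤ (k:ℝ)/(s:ℝ)^m := by rw [le_div_iff₀ hsm]; exact hk1
      have h2 : (0:ℝ) ≤ (e:ℝ)/((s:ℝ)^(m+1)*((s:ℝ)-1)) := by
        have : (0:ℝ) < (s:ℝ)-1 := by linarith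
        positivity
      have h3 : (0:ℝ) < 1/(s:ℝ)^(m+1) := by positivity
      linarith
    · have h4 : (e:ℝ)/((s:ℝ)^(m+1)*((s:ℝ)-1)) ≤ 1/(s:ℝ)^(m+1) := by
        rw [div_le_div_iff₀ (by nlinarith) hsm1]
        nlinarith
      have h5 : 1/(s:ℝ)^(m+1) + 1/(s:ℝ)^(m+1) ≤ 1/(s:ℝ)^m := by
        rw [← add_div, div_le_div_iff₀ hsm1 hsm, pow_succ]
        nlinarith
      have h6 : ((k:ℝ)+1)/(s:ℝ)^m ≤ b := by rw [div_le_iff₀ hsm]; exact hkb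
      have h7 : ((k:ℝ)+1)/(s:ℝ)^m = (k:ℝ)/(s:ℝ)^m + 1/(s:ℝ)^m := by ring
      linarith
  have hβc : ∀ (e : ℕ) n, n ≤ m → betaSeq A1 (αf e) n = betaSeq A1 (αf 0) n := by
    intro e n hn
    apply betaSeq_congr
    intro i hi
    rcases Nat.lt_or_ge i m with h | h
    · simp only [hαf, if_pos h]
    · have hi' : i = m := by omega
      simp [hαf, hi']
  set B : ℕ := betaSeq A1 (αf 0) m with hBdef
  have hv : ∀ e : ℕ, betaSeq A1 (αf e) (m+1) = if e = 1 then B else 1 - B := by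
    intro e
    have h1 : αf e (m+1) = e := by simp [hαf]
    have h2 : αf e m = 1 := by simp [hαf]
    rw [show betaSeq A1 (αf e) (m+1) = if αf e (m+1) = αf e m then betaSeq A1 (αf e) m
        else 1 - betaSeq A1 (αf e) m from rfl, h1, h2, hβc e m le_rfl, ← hBdef]
  have htail : ∀ e n, m+1 ≤ n → betaSeq A1 (αf e) n = betaSeq A1 (αf e) (m+1) := by
    intro e
    apply betaSeq_tail_const
    intro n hn
    have hn1 : ¬ (n < m) := by omega
    have hn2 : ¬ (n = m) := by omega
    simp [hαf, hn1, hn2]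
  set Q : ℝ := ∑ n ∈ Finset.range (m+1), (betaSeq A1 (αf 0) n : ℝ)/(2:ℝ)^(n+1) with hQdef
  have hfval : ∀ e : ℕ, e < s →
      f (sval s (αf e)) = Q + ((if e = 1 then B else 1 - B : ℕ) : ℝ) / 2 ^ (m+1) := by
    intro e he
    rw [hf (αf e) (hdig e he),
      sval_eventually_const 2 le_rfl _ (fun n => by have := betaSeq_le_one A1 (αf e) n; omega)
        (m+1) _ (htail e), hv e]
    have hsum : (∑ n ∈ Finset.range (m+1), (betaSeq A1 (αf e) n : ℝ)/((2:ℕ):ℝ)^(n+1)) = Q := by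
      apply Finset.sum_congr rfl
      intro n hn
      rw [Finset.mem_range] at hn
      rw [hβc e n (by omega)]
      norm_num
    rw [hsum]
    norm_num
  have hB01 : B = 0 ∨ B = 1 := by have := betaSeq_le_one A1 (αf 0) m; omega
  have pos2 : (0:ℝ) < 1/(2:ℝ)^(m+1) := by positivity
  constructor
  · intro hmono
    rcases hB01 with hB | hB
    · have h01 := hmono (hmem 0 (by norm_num)) (hmem 1 (by norm_num))
        (hlt 0 1 (by omega) (by omega)).le
      rw [hfval 0 (by omega), hfval 1 (by omega), hB] at h01
      norm_num at h01
      exact absurd h01 (by positivity : (0:ℝ) < 2 ^ (m+1)).not_ge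
    · have h12 := hmono (hmem 1 (by norm_num)) (hmem 2 (by norm_num))
        (hlt 1 2 (by omega) (by omega)).le
      rw [hfval 1 (by omega), hfval 2 (by omega), hB] at h12
      norm_num at h12
      exact absurd h12 (by positivity : (0:ℝ) < 2 ^ (m+1)).not_ge
  · intro hanti
    rcases hB01 with hB | hB
    · have h12 := hanti (hmem 1 (by norm_num)) (hmem 2 (by norm_num))
        (hlt 1 2 (by omega) (by omega)).le
      rw [hfval 1 (by omega), hfval 2 (by omega), hB] at h12
      norm_num at h12
      exact absurd h12 (by positivity : (0:ℝ) < 2 ^ (m+1)).not_ge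
    · have h01 := hanti (hmem 0 (by norm_num)) (hmem 1 (by norm_num))
        (hlt 0 1 (by omega) (by omega)).le
      rw [hfval 0 (by omega), hfval 1 (by omega), hB] at h01
      norm_num at h01
      exact absurd h01 (by positivity : (0:ℝ) < 2 ^ (m+1)).not_ge
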